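/- Let M₁, M₂, N₁, N₂ be positive integers with N := N₁·N₂ = M₁·M₂, and let F : Matrix (Fin N₁ × Fin N₂) (Fin M₁ × Fin M₂) ℂ be the quantum Fourier transform, F (j,k) (l,m) = exp(2πi·(j·N₂ + k)·(l·M₂ + m)/N)/√N. For each pair (s,t) with s < min(M₁, N₂) and t < min(N₁, M₂), let C(s,t) := {(x,y) : x < N₂, y < M₂, x ≡ s (mod M₁), y ≡ t (mod N₁)} (a nonempty finite set), let λ(s,t) := √(N₁·M₁·|C(s,t)|/N), let A(s,t) : Matrix (Fin N₁) (Fin M₁) ℂ have entries A(s,t) j l = exp(2πi·(N₂·M₂·j·l + M₂·l·s + N₂·j·t)/N)/√(N₁·M₁), and let B(s,t) : Matrix (Fin N₂) (Fin M₂) ℂ have entries B(s,t) x y = exp(2πi·x·y/N)/√|C(s,t)| if (x,y) ∈ C(s,t) and 0 otherwise. Then: (i) F (j,k) (l,m) = Σ_{(s,t)} λ(s,t) · A(s,t) j l · B(s,t) k m for all j,k,l,m, where the sum is over all such pairs (s,t); (ii) the family {A(s,t)} is orthonormal: trace((A(s,t))ᴴ * A(s',t')) = 1 if (s,t) = (s',t')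 and 0 otherwise; and (iii) the family {B(s,t)} is orthonormal: trace((B(s,t))ᴴ * B(s',t')) = 1 if (s,t) = (s',t') and 0 otherwise. In particular this is a generalized operator-Schmidt decomposition of F with Schmidt coefficients λ(s,t). -/

import Mathlib

open Matrix Complex

/-- The quantum Fourier transform `𝓕_{M₁M₂ → N₁N₂}` as a matrix, with `N = N₁N₂ = M₁M₂`. -/
noncomputable def QFT (M₁ M₂ N₁ N₂ : ℕ) : Matrix (Fin N₁ × Fin N₂) (Fin M₁ × Fin M₂) ℂ :=
  fun p q => Complex.exp (2 * Real.pi * Complex.I *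
      (((p.1.val : ℂ) * N₂ + p.2.val) * ((q.1.val : ℂ) * M₂ + q.2.val)) / (N₁ * N₂)) /
    Real.sqrt (N₁ * N₂)

/-- The equivalence class `C(s,t) = {(x,y) | x ≡ s (mod M₁), y ≡ t (mod N₁)}`. -/
def QFTclass (M₁ M₂ N₁ N₂ : ℕ) (s : Fin (min M₁ N₂)) (t : Fin (min N₁ M₂)) :
    Finset (Fin N₂ × Fin M₂) :=
  Finset.univ.filter fun xy => xy.1.val % M₁ = s.val ∧ xy.2.val % N₁ = t.val

/-- The Schmidt coefficient `λ(s,t) = √(N₁M₁|C(s,t)|/N)`. -/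
noncomputable def QFTlam (M₁ M₂ N₁ N₂ : ℕ) (s : Fin (min M₁ N₂)) (t : Fin (min N₁ M₂)) :
    ℝ :=
  Real.sqrt ((N₁ * M₁ * (QFTclass M₁ M₂ N₁ N₂ s t).card : ℝ) / (N₁ * N₂))

/-- The Alice-side Schmidt matrices `A(s,t)`. -/
noncomputable def QFTA (M₁ M₂ N₁ N₂ : ℕ) (s : Fin (min M₁ N₂)) (t : Fin (min N₁ M₂)) :
    Matrix (Fin N₁) (Fin M₁) ℂ :=
  fun j l => Complex.exp (2 * Real.pi * Complex.I *
      ((N₂ : ℂ) * M₂ * j.val * l.val + (M₂ : ℂ) * l.val * s.val + (N₂ : ℂ) * j.val * t.val) /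
      (N₁ * N₂)) / Real.sqrt (N₁ * M₁)

/-- The Bob-side Schmidt matrices `B(s,t)`, supported on the class `C(s,t)`. -/
noncomputable def QFTB (M₁ M₂ N₁ N₂ : ℕ) (s : Fin (min M₁ N₂)) (t : Fin (min N₁ M₂)) :
    Matrix (Fin N₂) (Fin M₂) ℂ :=
  fun x y =>
    if (x, y) ∈ QFTclass M₁ M₂ N₁ N₂ s t then
      Complex.exp (2 * Real.pi * Complex.I * ((x.val : ℂ) * y.val) / (N₁ * N₂)) /
        Real.sqrt ((QFTclass M₁ M₂ N₁ N₂ s t).card)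
    else 0

lemma conj_exp_mul_exp (x y : ℂ) (hx : (starRingEnd ℂ) x = -x) :
    (starRingEnd ℂ) (Complex.exp x) * Complex.exp y = Complex.exp (y - x) := by
  rw [← Complex.exp_conj, ← Complex.exp_add, hx]; ring_nf
lemma sum_exp_aux (n : ℕ) (hn : 0 < n) (d : ℤ) :
    ∑ l : Fin n, Complex.exp ((l.val : ℂ) * (2 * Real.pi * Complex.I * d / n)) =
      if (n : ℤ) ∣ d then (n : ℂ) else 0 := by
  have hnC : (n : ℂ) ≠ 0 := Nat.cast_ne_zero.mpr hn.ne'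
  set z : ℂ := 2 * Real.pi * Complex.I * d / n with hz
  have hterm : ∀ l : Fin n, Complex.exp ((l.val : ℂ) * z) = Complex.exp z ^ l.val :=
    fun l => Complex.exp_nat_mul z l.val
  simp_rw [hterm]
  split_ifs with hdvd
  · obtain ⟨e, he⟩ := hdvd
    have : Complex.exp z = 1 := by
      rw [hz]
      have : 2 * (Real.pi : ℂ) * Complex.I * d / n = (e : ℂ) * (2 * Real.pi * Complex.I) := by
        have : (d : ℂ) = n * e := by exact_mod_cast congrArg (Int.cast : ℤ → ℂ) he
        rw [this]; field_simp
      rw [this, Complex.exp_int_mul_two_pi_mul_I]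
    simp [this]
  · have hne : Complex.exp z ≠ 1 := by
      intro h
      rw [Complex.exp_eq_one_iff] at h
      obtain ⟨k, hk⟩ := h
      rw [hz] at hk
      have h2 : (2 * (Real.pi : ℂ) * Complex.I) ≠ 0 := by
        simp [Real.pi_ne_zero, Complex.I_ne_zero]
      have : (d : ℂ) = (k : ℂ) * n := by
        field_simp at hk
        have hk2 : (2 * (Real.pi:ℂ) * Complex.I) * d = (2 * (Real.pi:ℂ) * Complex.I) * ((k:ℂ) * n) := by
          linear_combination (2 * (Real.pi:ℂ) * Complex.I) * hk
        exact mul_left_cancel₀ h2 hk2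
      have : d = k * n := by exact_mod_cast this
      exact hdvd ⟨k, by linarith [this]⟩
    rw [Fin.sum_univ_eq_sum_range (fun i => Complex.exp z ^ i) n, geom_sum_eq hne]
    have : Complex.exp z ^ n = 1 := by
      rw [← Complex.exp_nat_mul, hz]
      have : (n : ℂ) * (2 * Real.pi * Complex.I * d / n) = (d:ℂ) * (2 * Real.pi * Complex.I) := by
        field_simp
      rw [this]
      exact_mod_cast Complex.exp_int_mul_two_pi_mul_I d
    simp [this]
lemma dvd_iff_eq_aux {n a b : ℕ} (ha : a < n) (hb : b < n) :
    (n : ℤ) ∣ ((b : ℤ) - a) ↔ a = b := by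
  constructor
  · rintro ⟨e, he⟩
    have h1 : -(n : ℤ) < (b : ℤ) - a := by omega
    have h2 : ((b : ℤ) - a) < n := by omega
    have hn0 : (0 : ℤ) < n := by omega
    have he0 : e = 0 := by nlinarith
    subst he0
    simp at he
    omega
  · rintro rfl; simp
lemma key_ring {R : Type*} [CommRing R] (J K L M A B C D m1 m2 n1 n2 : R)
    (hK : K = m1 * A + B) (hM : M = n1 * C + D) (hN : n1 * n2 = m1 * m2) :
    (J * n2 + K) * (L * m2 + M) =
      (n2 * m2 * J * L + m2 * L * B + n2 * J * D) + K * M + (J * C + L * A) * (n1 * n2) := by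
  subst hK hM
  linear_combination (-(L * A)) * hN
lemma class_nonempty (M₁ M₂ N₁ N₂ : ℕ) (s : Fin (min M₁ N₂)) (t : Fin (min N₁ M₂)) :
    (QFTclass M₁ M₂ N₁ N₂ s t).Nonempty := by
  refine ⟨(⟨s.val, lt_of_lt_of_le s.isLt (Nat.min_le_right _ _)⟩,
    ⟨t.val, lt_of_lt_of_le t.isLt (Nat.min_le_right _ _)⟩), ?_⟩
  simp only [QFTclass, Finset.mem_filter, Finset.mem_univ, true_and]
  exact ⟨Nat.mod_eq_of_lt (lt_of_lt_of_le s.isLt (Nat.min_le_left _ _)),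
    Nat.mod_eq_of_lt (lt_of_lt_of_le t.isLt (Nat.min_le_left _ _))⟩
lemma Aon (M₁ M₂ N₁ N₂ : ℕ) (hM₁ : 0 < M₁) (hM₂ : 0 < M₂) (hN₁ : 0 < N₁)
    (hN₂ : 0 < N₂) (hN : N₁ * N₂ = M₁ * M₂)
    (p q : Fin (min M₁ N₂) × Fin (min N₁ M₂)) :
    ((QFTA M₁ M₂ N₁ N₂ p.1 p.2)ᴴ * QFTA M₁ M₂ N₁ N₂ q.1 q.2).trace =
      if p = q then 1 else 0 := by
  obtain ⟨s, t⟩ := p; obtain ⟨s', t'⟩ := q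
  have hNC : (N₁ : ℂ) * N₂ = (M₁ : ℂ) * M₂ := by exact_mod_cast hN
  have hN₁C : (N₁ : ℂ) ≠ 0 := Nat.cast_ne_zero.mpr hN₁.ne'
  have hN₂C : (N₂ : ℂ) ≠ 0 := Nat.cast_ne_zero.mpr hN₂.ne'
  have hM₁C : (M₁ : ℂ) ≠ 0 := Nat.cast_ne_zero.mpr hM₁.ne'
  have hM₂C : (M₂ : ℂ) ≠ 0 := Nat.cast_ne_zero.mpr hM₂.ne'
  set ds : ℤ := (s'.val : ℤ) - s.val with hds
  set dt : ℤ := (t'.val : ℤ) - t.val with hdt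
  have hdsC : (ds : ℂ) = (s'.val : ℂ) - s.val := by rw [hds]; push_cast; ring
  have hdtC : (dt : ℂ) = (t'.val : ℂ) - t.val := by rw [hdt]; push_cast; ring
  have h1 : 2 * (Real.pi : ℂ) * Complex.I * ds / M₁ =
      2 * Real.pi * Complex.I * ((ds : ℂ) * M₂) / (N₁ * N₂) := by
    rw [hNC]; field_simp
  have h2 : 2 * (Real.pi : ℂ) * Complex.I * dt / N₁ =
      2 * Real.pi * Complex.I * ((dt : ℂ) * N₂) / (N₁ * N₂) := by
    field_simp
  have hden : ((Real.sqrt (N₁ * M₁) : ℝ) : ℂ) * ((Real.sqrt (N₁ * M₁) : ℝ) : ℂ) =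
      (N₁ : ℂ) * M₁ := by
    rw [← Complex.ofReal_mul, Real.mul_self_sqrt (by positivity)]; push_cast; ring
  have htr : ((QFTA M₁ M₂ N₁ N₂ s t)ᴴ * QFTA M₁ M₂ N₁ N₂ s' t').trace =
      ∑ l : Fin M₁, ∑ j : Fin N₁,
        (starRingEnd ℂ) (QFTA M₁ M₂ N₁ N₂ s t j l) * QFTA M₁ M₂ N₁ N₂ s' t' j l := by
    simp [Matrix.trace, Matrix.diag, Matrix.mul_apply, Matrix.conjTranspose_apply]
  rw [htr]
  have hterm : ∀ (l : Fin M₁) (j : Fin N₁),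
      (starRingEnd ℂ) (QFTA M₁ M₂ N₁ N₂ s t j l) * QFTA M₁ M₂ N₁ N₂ s' t' j l =
        Complex.exp ((l.val : ℂ) * (2 * Real.pi * Complex.I * ds / M₁)) *
          Complex.exp ((j.val : ℂ) * (2 * Real.pi * Complex.I * dt / N₁)) / ((N₁ : ℂ) * M₁) := by
    intro l j
    unfold QFTA
    rw [map_div₀, Complex.conj_ofReal, div_mul_div_comm, hden,
      conj_exp_mul_exp _ _ (by
        simp only [map_div₀, _root_.map_mul, map_add, Complex.conj_ofReal, Complex.conj_I,
          map_natCast, map_ofNat]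
        ring), ← Complex.exp_add]
    congr 2
    rw [h1, h2, hdsC, hdtC]
    field_simp
    ring
  simp_rw [hterm]
  have hsum : ((∑ l : Fin M₁, Complex.exp ((l.val : ℂ) * (2 * Real.pi * Complex.I * ds / M₁))) *
      (∑ j : Fin N₁, Complex.exp ((j.val : ℂ) * (2 * Real.pi * Complex.I * dt / N₁)))) / ((N₁ : ℂ) * M₁) =
      ∑ l : Fin M₁, ∑ j : Fin N₁,
        Complex.exp ((l.val : ℂ) * (2 * Real.pi * Complex.I * ds / M₁)) *
          Complex.exp ((j.val : ℂ) * (2 * Real.pi * Complex.I * dt / N₁)) / ((N₁ : ℂ) * M₁) := by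
    rw [Finset.sum_mul_sum]
    simp [Finset.sum_div]
  rw [← hsum, sum_exp_aux M₁ hM₁ ds, sum_exp_aux N₁ hN₁ dt]
  have hsb : s.val < M₁ := lt_of_lt_of_le s.isLt (Nat.min_le_left _ _)
  have hsb' : s'.val < M₁ := lt_of_lt_of_le s'.isLt (Nat.min_le_left _ _)
  have htb : t.val < N₁ := lt_of_lt_of_le t.isLt (Nat.min_le_left _ _)
  have htb' : t'.val < N₁ := lt_of_lt_of_le t'.isLt (Nat.min_le_left _ _)
  by_cases hss : s = s'
  · by_cases htt : t = t'
    · subst hss; subst htt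
      simp only [hds, hdt, sub_self, dvd_refl, if_pos, Prod.mk.injEq, and_self, if_true]
      rw [if_pos (by simp), if_pos (by simp)]
      field_simp
    · have : ¬ (N₁ : ℤ) ∣ dt := fun h => htt (Fin.ext ((dvd_iff_eq_aux htb htb').mp h))
      rw [if_neg this]
      simp [htt]
  · have : ¬ (M₁ : ℤ) ∣ ds := fun h => hss (Fin.ext ((dvd_iff_eq_aux hsb hsb').mp h))
    rw [if_neg this]
    simp [hss]
lemma Bon (M₁ M₂ N₁ N₂ : ℕ)
    (p q : Fin (min M₁ N₂) × Fin (min N₁ M₂)) :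
    ((QFTB M₁ M₂ N₁ N₂ p.1 p.2)ᴴ * QFTB M₁ M₂ N₁ N₂ q.1 q.2).trace =
      if p = q then 1 else 0 := by
  obtain ⟨s, t⟩ := p; obtain ⟨s', t'⟩ := q
  have htr : ((QFTB M₁ M₂ N₁ N₂ s t)ᴴ * QFTB M₁ M₂ N₁ N₂ s' t').trace =
      ∑ y : Fin M₂, ∑ x : Fin N₂,
        (starRingEnd ℂ) (QFTB M₁ M₂ N₁ N₂ s t x y) * QFTB M₁ M₂ N₁ N₂ s' t' x y := by
    simp [Matrix.trace, Matrix.diag, Matrix.mul_apply, Matrix.conjTranspose_apply]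
  rw [htr]
  by_cases hpq : (s, t) = (s', t')
  · have hs : s = s' := congrArg Prod.fst hpq
    have ht : t = t' := congrArg Prod.snd hpq
    subst hs; subst ht
    rw [if_pos rfl]
    set c := (QFTclass M₁ M₂ N₁ N₂ s t).card with hc
    have hc0 : 0 < c := Finset.card_pos.mpr (class_nonempty M₁ M₂ N₁ N₂ s t)
    have hcC : (c : ℂ) ≠ 0 := Nat.cast_ne_zero.mpr hc0.ne'
    have hterm : ∀ (x : Fin N₂) (y : Fin M₂),
        (starRingEnd ℂ) (QFTB M₁ M₂ N₁ N₂ s t x y) * QFTB M₁ M₂ N₁ N₂ s t x y =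
          if (x, y) ∈ QFTclass M₁ M₂ N₁ N₂ s t then (c : ℂ)⁻¹ else 0 := by
      intro x y
      unfold QFTB
      split_ifs with h
      · rw [map_div₀, Complex.conj_ofReal, div_mul_div_comm,
          conj_exp_mul_exp _ _ (by
            simp only [map_div₀, _root_.map_mul, Complex.conj_ofReal, Complex.conj_I,
              map_natCast, map_ofNat]
            ring), sub_self, Complex.exp_zero, ← hc]
        rw [← Complex.ofReal_mul, Real.mul_self_sqrt (Nat.cast_nonneg c)]
        norm_num
      · norm_num
    simp_rw [hterm]
    rw [Finset.sum_comm, ← Finset.sum_product']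
    simp only [Prod.mk.eta, Finset.univ_product_univ]
    rw [Finset.sum_ite_mem, Finset.univ_inter, Finset.sum_const, nsmul_eq_mul, ← hc]
    field_simp
  · rw [if_neg hpq]
    have hterm : ∀ (x : Fin N₂) (y : Fin M₂),
        (starRingEnd ℂ) (QFTB M₁ M₂ N₁ N₂ s t x y) * QFTB M₁ M₂ N₁ N₂ s' t' x y = 0 := by
      intro x y
      by_cases h' : (x, y) ∈ QFTclass M₁ M₂ N₁ N₂ s' t'
      · have h : (x, y) ∉ QFTclass M₁ M₂ N₁ N₂ s t := by
          intro h
          simp only [QFTclass, Finset.mem_filter, Finset.mem_univ, true_and] at h h'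
          exact hpq (by rw [Prod.mk.injEq]; exact ⟨Fin.ext (h.1 ▸ h'.1.symm ▸ rfl),
            Fin.ext (h.2 ▸ h'.2.symm ▸ rfl)⟩)
        simp [QFTB, if_neg h]
      · simp [QFTB, if_neg h']
    simp [hterm]
lemma decomp (M₁ M₂ N₁ N₂ : ℕ) (hM₁ : 0 < M₁) (hM₂ : 0 < M₂) (hN₁ : 0 < N₁)
    (hN₂ : 0 < N₂) (hN : N₁ * N₂ = M₁ * M₂)
    (j : Fin N₁) (k : Fin N₂) (l : Fin M₁) (m : Fin M₂) :
    QFT M₁ M₂ N₁ N₂ (j, k) (l, m) =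
      ∑ s : Fin (min M₁ N₂), ∑ t : Fin (min N₁ M₂),
        (QFTlam M₁ M₂ N₁ N₂ s t : ℂ) * QFTA M₁ M₂ N₁ N₂ s t j l *
          QFTB M₁ M₂ N₁ N₂ s t k m := by
  have hNC : (N₁ : ℂ) * N₂ = (M₁ : ℂ) * M₂ := by exact_mod_cast hN
  have hN₁C : (N₁ : ℂ) ≠ 0 := Nat.cast_ne_zero.mpr hN₁.ne'
  have hN₂C : (N₂ : ℂ) ≠ 0 := Nat.cast_ne_zero.mpr hN₂.ne'
  set s₀ : Fin (min M₁ N₂) :=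
    ⟨k.val % M₁, lt_min (Nat.mod_lt _ hM₁) (lt_of_le_of_lt (Nat.mod_le _ _) k.isLt)⟩ with hs₀
  set t₀ : Fin (min N₁ M₂) :=
    ⟨m.val % N₁, lt_min (Nat.mod_lt _ hN₁) (lt_of_le_of_lt (Nat.mod_le _ _) m.isLt)⟩ with ht₀
  have hmem : (k, m) ∈ QFTclass M₁ M₂ N₁ N₂ s₀ t₀ := by
    simp [QFTclass, hs₀, ht₀]
  have hB0 : ∀ (s : Fin (min M₁ N₂)) (t : Fin (min N₁ M₂)), (s ≠ s₀ ∨ t ≠ t₀) →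
      QFTB M₁ M₂ N₁ N₂ s t k m = 0 := by
    intro s t hst
    simp only [QFTB]
    rw [if_neg]
    intro h
    simp only [QFTclass, Finset.mem_filter, Finset.mem_univ, true_and] at h
    rcases hst with h' | h'
    · exact h' (Fin.ext (by rw [hs₀]; exact h.1 ▸ rfl))
    · exact h' (Fin.ext (by rw [ht₀]; exact h.2 ▸ rfl))
  rw [Finset.sum_eq_single s₀ (fun s _ hs => Finset.sum_eq_zero fun t _ => by
      rw [hB0 s t (Or.inl hs), mul_zero]) (by simp)]
  rw [Finset.sum_eq_single t₀ (fun t _ ht => by rw [hB0 s₀ t (Or.inr ht), mul_zero])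
    (by simp)]
  -- now the single term
  set c := (QFTclass M₁ M₂ N₁ N₂ s₀ t₀).card with hc
  have hc0 : 0 < c := Finset.card_pos.mpr (class_nonempty M₁ M₂ N₁ N₂ s₀ t₀)
  have hcR : (0:ℝ) < c := by exact_mod_cast hc0
  have hkC : (k.val : ℂ) = (M₁ : ℂ) * ((k.val / M₁ : ℕ) : ℂ) + ((k.val % M₁ : ℕ) : ℂ) := by
    exact_mod_cast (Nat.div_add_mod k.val M₁).symm
  have hmC : (m.val : ℂ) = (N₁ : ℂ) * ((m.val / N₁ : ℕ) : ℂ) + ((m.val % N₁ : ℕ) : ℂ) := by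
    exact_mod_cast (Nat.div_add_mod m.val N₁).symm
  have key := key_ring (j.val : ℂ) (k.val : ℂ) (l.val : ℂ) (m.val : ℂ)
    ((k.val / M₁ : ℕ) : ℂ) ((k.val % M₁ : ℕ) : ℂ) ((m.val / N₁ : ℕ) : ℂ) ((m.val % N₁ : ℕ) : ℂ)
    (M₁ : ℂ) (M₂ : ℂ) (N₁ : ℂ) (N₂ : ℂ) hkC hmC hNC
  -- split the exponential
  set c₀ : ℕ := j.val * (m.val / N₁) + l.val * (k.val / M₁) with hc₀
  have hc₀C : ((c₀ : ℕ) : ℂ) = (j.val : ℂ) * ((m.val / N₁ : ℕ) : ℂ) +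
      (l.val : ℂ) * ((k.val / M₁ : ℕ) : ℂ) := by push_cast [hc₀]; ring
  have hsplit : 2 * (Real.pi : ℂ) * Complex.I *
        (((j.val : ℂ) * N₂ + k.val) * ((l.val : ℂ) * M₂ + m.val)) / (N₁ * N₂) =
      2 * (Real.pi : ℂ) * Complex.I *
          ((N₂ : ℂ) * M₂ * j.val * l.val + (M₂ : ℂ) * l.val * (s₀.val : ℂ) +
            (N₂ : ℂ) * j.val * (t₀.val : ℂ)) / (N₁ * N₂) +
        2 * (Real.pi : ℂ) * Complex.I * ((k.val : ℂ) * m.val) / (N₁ * N₂) +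
        ((c₀ : ℕ) : ℂ) * (2 * Real.pi * Complex.I) := by
    rw [key, hc₀C]
    have hsv : (s₀.val : ℂ) = ((k.val % M₁ : ℕ) : ℂ) := by rw [hs₀]
    have htv : (t₀.val : ℂ) = ((m.val % N₁ : ℕ) : ℂ) := by rw [ht₀]
    rw [hsv, htv]
    field_simp
  have hexp : Complex.exp (2 * (Real.pi : ℂ) * Complex.I *
        (((j.val : ℂ) * N₂ + k.val) * ((l.val : ℂ) * M₂ + m.val)) / (N₁ * N₂)) =
      Complex.exp (2 * (Real.pi : ℂ) * Complex.I *
          ((N₂ : ℂ) * M₂ * j.val * l.val + (M₂ : ℂ) * l.val * (s₀.val : ℂ) +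
            (N₂ : ℂ) * j.val * (t₀.val : ℂ)) / (N₁ * N₂)) *
        Complex.exp (2 * (Real.pi : ℂ) * Complex.I * ((k.val : ℂ) * m.val) / (N₁ * N₂)) := by
    rw [hsplit, Complex.exp_add, Complex.exp_add]
    have : Complex.exp (((c₀ : ℕ) : ℂ) * (2 * Real.pi * Complex.I)) = 1 := by
      have := Complex.exp_int_mul_two_pi_mul_I (c₀ : ℤ)
      push_cast at this ⊢
      exact this
    rw [this, mul_one]
  -- the sqrt computation
  have hlam : (QFTlam M₁ M₂ N₁ N₂ s₀ t₀ : ℝ) =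
      Real.sqrt (N₁ * M₁) * Real.sqrt c / Real.sqrt (N₁ * N₂) := by
    rw [QFTlam, ← hc]
    rw [Real.sqrt_div (by positivity), Real.sqrt_mul (by positivity)]
  rw [QFT, QFTA, QFTB]
  simp only
  rw [if_pos hmem, ← hc, hexp, hlam]
  have hs1C : ((Real.sqrt (N₁ : ℝ) : ℝ) : ℂ) ≠ 0 := by
    exact_mod_cast (by positivity : Real.sqrt (N₁ : ℝ) ≠ 0)
  have hs2C : ((Real.sqrt (N₂ : ℝ) : ℝ) : ℂ) ≠ 0 := by
    exact_mod_cast (by positivity : Real.sqrt (N₂ : ℝ) ≠ 0)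
  have hs3C : ((Real.sqrt (M₁ : ℝ) : ℝ) : ℂ) ≠ 0 := by
    exact_mod_cast (by positivity : Real.sqrt (M₁ : ℝ) ≠ 0)
  have hs4C : ((Real.sqrt (c : ℝ) : ℝ) : ℂ) ≠ 0 := by
    exact_mod_cast (by positivity : Real.sqrt (c : ℝ) ≠ 0)
  rw [show ((N₁:ℝ) * N₂) = ((N₁:ℝ)) * (N₂:ℝ) from rfl, Real.sqrt_mul (by positivity),
    show ((N₁:ℝ) * M₁) = ((N₁:ℝ)) * (M₁:ℝ) from rfl, Real.sqrt_mul (by positivity)]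
  push_cast
  field_simp

/-- Generalized operator-Schmidt decomposition of the quantum Fourier transform:
`F = Σ_{(s,t)} λ(s,t) A(s,t) ⊗ B(s,t)` with `{A(s,t)}` and `{B(s,t)}` orthonormal
families (and each class `C(s,t)` nonempty). -/
theorem stmt_13 (M₁ M₂ N₁ N₂ : ℕ) (hM₁ : 0 < M₁) (hM₂ : 0 < M₂) (hN₁ : 0 < N₁)
    (hN₂ : 0 < N₂) (hN : N₁ * N₂ = M₁ * M₂) :
    (∀ (s : Fin (min M₁ N₂)) (t : Fin (min N₁ M₂)),
        (QFTclass M₁ M₂ N₁ N₂ s t).Nonempty) ∧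
    (∀ (j : Fin N₁) (k : Fin N₂) (l : Fin M₁) (m : Fin M₂),
        QFT M₁ M₂ N₁ N₂ (j, k) (l, m) =
          ∑ s : Fin (min M₁ N₂), ∑ t : Fin (min N₁ M₂),
            (QFTlam M₁ M₂ N₁ N₂ s t : ℂ) * QFTA M₁ M₂ N₁ N₂ s t j l *
              QFTB M₁ M₂ N₁ N₂ s t k m) ∧
    (∀ p q : Fin (min M₁ N₂) × Fin (min N₁ M₂),
        ((QFTA M₁ M₂ N₁ N₂ p.1 p.2)ᴴ * QFTA M₁ M₂ N₁ N₂ q.1 q.2).trace =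
          if p = q then 1 else 0) ∧
    (∀ p q : Fin (min M₁ N₂) × Fin (min N₁ M₂),
        ((QFTB M₁ M₂ N₁ N₂ p.1 p.2)ᴴ * QFTB M₁ M₂ N₁ N₂ q.1 q.2).trace =
          if p = q then 1 else 0) := by
  exact ⟨class_nonempty M₁ M₂ N₁ N₂,
    decomp M₁ M₂ N₁ N₂ hM₁ hM₂ hN₁ hN₂ hN,
    Aon M₁ M₂ N₁ N₂ hM₁ hM₂ hN₁ hN₂ hN,
    Bon M₁ M₂ N₁ N₂⟩
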